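/- Suppose N is prime and let Θ^splay be the splay configuration θ_k = 2π(k−1)/N. Then either the effective coupling graph at Θ^splay is the empty graph (this happens when 2πn/N ∈ DZ(g) for all n with 1 ≤ n < N), or it contains a directed cycle passing through all N vertices; in the latter case the effective coupling graph is strongly connected. -/

import Mathlib

open Real Set

/-- The dead zone of a coupling function: the set of points at which `g` is locally zero. -/
def DZ (g : ℝ → ℝ) : Set ℝ := {x | ∃ U : Set ℝ, IsOpen U ∧ x ∈ U ∧ ∀ y ∈ U, g y = 0}

lemma DZ_add_two_pi {g : ℝ → ℝ} (hper : Function.Periodic g (2 * Real.pi))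
    {x : ℝ} (hx : x ∈ DZ g) : x + 2 * Real.pi ∈ DZ g := by
  obtain ⟨U, hU, hxU, hg⟩ := hx
  refine ⟨(· - 2 * Real.pi) ⁻¹' U, hU.preimage (by continuity), by simpa, ?_⟩
  intro y hy
  have h1 := hg _ hy
  have h2 := hper (y - 2 * Real.pi)
  simp only [sub_add_cancel] at h2
  exact h2.trans h1

lemma DZ_sub_two_pi {g : ℝ → ℝ} (hper : Function.Periodic g (2 * Real.pi))
    {x : ℝ} (hx : x ∈ DZ g) : x - 2 * Real.pi ∈ DZ g := by
  obtain ⟨U, hU, hxU, hg⟩ := hx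
  refine ⟨(· + 2 * Real.pi) ⁻¹' U, hU.preimage (by continuity), by simpa, ?_⟩
  intro y hy
  have h1 := hg _ hy
  have h2 := hper y
  rw [← h2]; exact h1

lemma splay_key (N : ℕ) [NeZero N] (g : ℝ → ℝ)
    (hper : Function.Periodic g (2 * Real.pi))
    (θ : ZMod N → ℝ) (hθ : ∀ k : ZMod N, θ k = 2 * Real.pi * k.val / N)
    (a b : ZMod N) :
    (θ a - θ b ∈ DZ g ↔ 2 * Real.pi * ((a - b).val : ℝ) / N ∈ DZ g) := by
  have hNpos : 0 < N := Nat.pos_of_ne_zero (NeZero.ne N)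
  have hN : (0:ℝ) < N := by exact_mod_cast hNpos
  set d : ℤ := (a.val : ℤ) - b.val with hd
  set m : ℕ := (a - b).val with hm
  have hcast : ((d : ZMod N)) = ((m : ℤ) : ZMod N) := by
    push_cast
    simp [hd, hm, ZMod.natCast_val, ZMod.cast_id]
  have hdvd : (N : ℤ) ∣ m - d := ((ZMod.intCast_eq_intCast_iff d m N).mp hcast).dvd
  have hdlb : -(N:ℤ) < d := by
    have := b.val_lt; omega
  have hdub : d < N := by
    have := a.val_lt; omega
  have hmub : (m:ℤ) < N := by exact_mod_cast (a - b).val_lt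
  have hcase : d = m ∨ d = m - N := by
    obtain ⟨q, hq⟩ := hdvd
    have hq0 : q = 0 ∨ q = 1 := by
      rcases lt_trichotomy q 0 with h | h | h
      · exfalso; nlinarith [(Int.le_sub_one_iff.mpr h : q ≤ -1)]
      · left; exact h
      · right
        by_contra hne
        have h2 : 2 ≤ q := by omega
        nlinarith
    rcases hq0 with h | h <;> rw [h] at hq <;> omega
  have hval : θ a - θ b = 2 * Real.pi * (d : ℝ) / N := by
    rw [hθ a, hθ b, hd]
    push_cast
    ring
  rcases hcase with h0 | h1
  · rw [hval, h0]; norm_cast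
  · have e : 2 * Real.pi * (d : ℝ) / N = 2 * Real.pi * (m : ℝ) / N - 2 * Real.pi := by
      rw [h1]; push_cast; field_simp
    rw [hval, e]
    constructor
    · intro hx
      have := DZ_add_two_pi hper hx
      simpa using this
    · intro hx
      exact DZ_sub_two_pi hper hx

theorem splay_prime (N : ℕ) (hp : N.Prime) (g : ℝ → ℝ)
    (hper : Function.Periodic g (2 * Real.pi))
    (θ : ZMod N → ℝ) (hθ : ∀ k : ZMod N, θ k = 2 * Real.pi * k.val / N) :
    ((∀ n : ℕ, 1 ≤ n → n < N → (2 * Real.pi * n / N) ∈ DZ g) →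
        ∀ j k : ZMod N, ¬(j ≠ k ∧ θ j - θ k ∉ DZ g)) ∧
    ((∀ j k : ZMod N, ¬(j ≠ k ∧ θ j - θ k ∉ DZ g)) ∨
      ((∃ c : ZMod N → ZMod N, Function.Bijective c ∧
          ∀ i : ZMod N, c i ≠ c (i + 1) ∧ θ (c i) - θ (c (i + 1)) ∉ DZ g) ∧
        ∀ v w : ZMod N, v ≠ w →
          Relation.TransGen (fun a b : ZMod N => a ≠ b ∧ θ a - θ b ∉ DZ g) v w)) := by
  haveI : Fact N.Prime := ⟨hp⟩
  haveI : NeZero N := ⟨hp.ne_zero⟩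
  have part1 : (∀ n : ℕ, 1 ≤ n → n < N → (2 * Real.pi * n / N) ∈ DZ g) →
      ∀ j k : ZMod N, ¬(j ≠ k ∧ θ j - θ k ∉ DZ g) := by
    intro hall j k ⟨hjk, hdz⟩
    apply hdz
    rw [splay_key N g hper θ hθ j k]
    have hm0 : (j - k).val ≠ 0 := by
      intro h0
      exact hjk (sub_eq_zero.mp ((ZMod.val_eq_zero _).mp h0))
    exact hall _ (Nat.one_le_iff_ne_zero.mpr hm0) (j - k).val_lt
  refine ⟨part1, ?_⟩
  by_cases hall : ∀ n : ℕ, 1 ≤ n → n < N → (2 * Real.pi * n / N) ∈ DZ g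
  · exact Or.inl (part1 hall)
  · right
    push_neg at hall
    obtain ⟨n0, h1, h2, hdz0⟩ := hall
    have n0z : (n0 : ZMod N) ≠ 0 := by
      intro h
      have hv : ((n0 : ZMod N)).val = n0 := ZMod.val_cast_of_lt h2
      rw [h, ZMod.val_zero] at hv
      omega
    have edge : ∀ a : ZMod N, a ≠ a - (n0 : ZMod N) ∧ θ a - θ (a - (n0:ZMod N)) ∉ DZ g := by
      intro a
      have hne : a ≠ a - (n0 : ZMod N) := by
        intro h
        exact n0z (sub_eq_self.mp h.symm)
      refine ⟨hne, ?_⟩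
      rw [splay_key N g hper θ hθ]
      have hs : a - (a - (n0:ZMod N)) = (n0 : ZMod N) := by ring
      rw [hs, ZMod.val_cast_of_lt h2]
      exact hdz0
    constructor
    · refine ⟨fun i => -(n0 : ZMod N) * i, ?_, ?_⟩
      · exact (Equiv.mulLeft₀ (-(n0:ZMod N)) (neg_ne_zero.mpr n0z)).bijective
      · intro i
        have e : -(n0:ZMod N) * (i + 1) = -(n0:ZMod N) * i - (n0:ZMod N) := by ring
        have h3 := edge (-(n0:ZMod N) * i)
        rw [← e] at h3
        exact h3
    · intro v w hvw
      set R : ZMod N → ZMod N → Prop := fun a b => a ≠ b ∧ θ a - θ b ∉ DZ g with hR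
      have step : ∀ a : ZMod N, R a (a - (n0:ZMod N)) := edge
      have reach : ∀ k : ℕ, ∀ v : ZMod N,
          Relation.TransGen R v (v - ((k + 1 : ℕ) : ZMod N) * (n0:ZMod N)) := by
        intro k
        induction k with
        | zero =>
          intro v
          have e : v - ((0 + 1 : ℕ) : ZMod N) * (n0:ZMod N) = v - (n0:ZMod N) := by
            push_cast; ring
          rw [e]
          exact Relation.TransGen.single (step v)
        | succ k ih =>
          intro v
          have e : v - ((k + 1 + 1 : ℕ) : ZMod N) * (n0:ZMod N)
              = (v - ((k + 1 : ℕ) : ZMod N) * (n0:ZMod N)) - (n0:ZMod N) := by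
            push_cast; ring
          rw [e]
          exact (ih v).tail (step _)
      set u : ZMod N := (v - w) * (n0 : ZMod N)⁻¹ with hu
      have hu0 : u ≠ 0 := mul_ne_zero (sub_ne_zero.mpr hvw) (inv_ne_zero n0z)
      have huv : u.val ≠ 0 := fun h => hu0 ((ZMod.val_eq_zero u).mp h)
      have hw : w = v - ((u.val : ℕ) : ZMod N) * (n0:ZMod N) := by
        have hc : ((u.val : ℕ) : ZMod N) = u := by
          simp [ZMod.natCast_val, ZMod.cast_id]
        rw [hc, hu]
        field_simp
        ring
      obtain ⟨k, hk⟩ : ∃ k : ℕ, u.val = k + 1 := ⟨u.val - 1, by omega⟩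
      rw [hw, hk]
      exact reach k v
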